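/- With all weights equal to 1, the generating function of Dyck N-excursions counted by length equals D^+(0,1;t) = (1 - 8t^2 - (1-12t^2) sqrt(1-8t^2)) / (8t^2 (1-9t^2)), with series expansion 1 + 4t^2 + 28t^4 + 224t^6 + 1888t^8 + ... -/

import Mathlib

/-- A classical walk `v` is compatible with the N-walk `w` if they have the same
length and the `i`-th step of `v` belongs to the `i`-th N-step of `w`. -/
def Compatible (v : List ℤ) (w : List (Finset ℤ)) : Prop :=
  List.Forall₂ (· ∈ ·) v w

/-- The reachable points of an N-walk: endpoints of all compatible classical walks. -/
def reach (w : List (Finset ℤ)) : Set ℤ :=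
  {r | ∃ v : List ℤ, Compatible v w ∧ v.sum = r}

/-- Minimal reachable point. -/
noncomputable def wmin (w : List (Finset ℤ)) : ℤ := sInf (reach w)

/-- Maximal reachable point. -/
noncomputable def wmax (w : List (Finset ℤ)) : ℤ := sSup (reach w)

/-- A Dyck N-walk: every N-step is one of {-1}, {1}, {-1,1}. -/
def IsDyckNWalk (w : List (Finset ℤ)) : Prop :=
  ∀ s ∈ w, s = {-1} ∨ s = {1} ∨ s = ({-1, 1} : Finset ℤ)

/-- A Motzkin N-walk: every N-step is a nonempty subset of {-1,0,1}. -/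
def IsMotzkinNWalk (w : List (Finset ℤ)) : Prop :=
  ∀ s ∈ w, s.Nonempty ∧ s ⊆ ({-1, 0, 1} : Finset ℤ)

/-- A classical meander: all partial sums are nonnegative. -/
def IsMeanderW (v : List ℤ) : Prop := ∀ n : ℕ, 0 ≤ (v.take n).sum

/-- An N-bridge: compatible with at least one classical walk ending at 0. -/
def IsNBridge (w : List (Finset ℤ)) : Prop := ∃ v, Compatible v w ∧ v.sum = 0

/-- An N-meander: compatible with at least one classical meander. -/
def IsNMeander (w : List (Finset ℤ)) : Prop := ∃ v, Compatible v w ∧ IsMeanderW v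

/-- An N-excursion: compatible with at least one classical excursion. -/
def IsNExcursion (w : List (Finset ℤ)) : Prop :=
  ∃ v, Compatible v w ∧ IsMeanderW v ∧ v.sum = 0

/-- Number of Dyck N-excursions of length n. -/
noncomputable def dyckExcursionCount (n : ℕ) : ℕ :=
  Nat.card {w : List (Finset ℤ) // w.length = n ∧ IsDyckNWalk w ∧ IsNExcursion w}

namespace DyckN

inductive L | M | P | F deriving DecidableEq

instance : Fintype L := ⟨⟨{L.M, L.P, L.F}, by decide⟩, fun x => by cases x <;> decide⟩

def enc : L → Finset ℤ | .M => {-1} | .P => {1} | .F => {-1, 1}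

def stepSt : ℕ × ℕ → L → Option (ℕ × ℕ)
  | (0, 0), .M => none
  | (0, q+1), .M => some (1, q)
  | (a+1, q), .M => some (a, q)
  | (a, q), .P => some (a+1, q)
  | (0, q), .F => some (1, q)
  | (a+1, q), .F => some (a, q+1)

def next (o : Option (ℕ × ℕ)) (ℓ : L) : Option (ℕ × ℕ) := o.bind (fun s => stepSt s ℓ)

def stFrom (o : Option (ℕ × ℕ)) : List L → Option (ℕ × ℕ)
  | [] => o
  | ℓ :: x => stFrom (next o ℓ) x

def isGood : Option (ℕ × ℕ) → Bool | some (0, _) => true | _ => false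

def good (o : Option (ℕ × ℕ)) (x : List L) : Prop := isGood (stFrom o x) = true

def c : ℕ → Option (ℕ × ℕ) → ℕ
  | 0, o => if isGood o then 1 else 0
  | n+1, o => c n (next o .M) + c n (next o .P) + c n (next o .F)

/-- meander-reach set -/
def mset (w : List (Finset ℤ)) : Set ℤ :=
  {r | ∃ v, Compatible v w ∧ IsMeanderW v ∧ v.sum = r}

def ival : Option (ℕ × ℕ) → Set ℤ
  | none => ∅
  | some (a, q) => {z | ∃ i : ℕ, i ≤ q ∧ z = (a : ℤ) + 2 * i}

lemma meander_append {v : List ℤ} {y : ℤ} :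
    IsMeanderW (v ++ [y]) ↔ IsMeanderW v ∧ 0 ≤ v.sum + y := by
  constructor
  · intro h
    refine ⟨fun n => ?_, ?_⟩
    · by_cases hn : n ≤ v.length
      · have := h n
        rwa [List.take_append_of_le_length hn] at this
      · rw [List.take_of_length_le (by omega)]
        have := h v.length
        rwa [List.take_append_of_le_length le_rfl, List.take_length] at this
    · have := h (v.length + 1)
      rwa [List.take_of_length_le (by simp), List.sum_append, List.sum_singleton] at this
  · rintro ⟨hm, hs⟩ n
    by_cases hn : n ≤ v.length
    · rw [List.take_append_of_le_length hn]; exact hm n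
    · rw [List.take_of_length_le (by simp; omega), List.sum_append, List.sum_singleton]
      exact hs

lemma mset_append_singleton (w : List (Finset ℤ)) (s : Finset ℤ) :
    mset (w ++ [s]) = {z | ∃ r ∈ mset w, ∃ y ∈ s, 0 ≤ r + y ∧ z = r + y} := by
  ext z
  constructor
  · rintro ⟨v, hc, hm, rfl⟩
    have h1 := List.forall₂_take_append v w [s] hc
    have h2 := List.forall₂_drop_append v w [s] hc
    rcases hd : v.drop w.length with _ | ⟨y, v2⟩ <;> rw [hd] at h2
    · cases h2
    cases h2 with
    | cons hy h3 =>
      cases h3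
      have hv : v = v.take w.length ++ [y] := by
        conv_lhs => rw [← List.take_append_drop w.length v]
        rw [hd]
      rw [hv] at hm ⊢
      rw [meander_append] at hm
      exact ⟨(v.take w.length).sum, ⟨_, h1, hm.1, rfl⟩, y, hy, hm.2, by simp⟩
  · rintro ⟨r, ⟨v, hc, hm, rfl⟩, y, hy, h0, rfl⟩
    exact ⟨v ++ [y], List.rel_append hc (List.Forall₂.cons hy List.Forall₂.nil),
      meander_append.mpr ⟨hm, h0⟩, by simp⟩



lemma ival_step (p : ℕ × ℕ) (ℓ : L) :
    {z : ℤ | ∃ r ∈ ival (some p), ∃ y ∈ enc ℓ, 0 ≤ r + y ∧ z = r + y} =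
      ival (stepSt p ℓ) := by
  obtain ⟨a, q⟩ := p
  cases ℓ
  · -- M
    match a, q with
    | 0, 0 =>
      ext z; simp only [ival, stepSt, enc, Set.mem_setOf_eq, Finset.mem_singleton,
        Set.mem_empty_iff_false, iff_false]
      rintro ⟨r, ⟨i, hi, rfl⟩, y, rfl, h0, rfl⟩; omega
    | 0, q+1 =>
      ext z; simp only [ival, stepSt, enc, Set.mem_setOf_eq, Finset.mem_singleton]
      constructor
      · rintro ⟨r, ⟨i, hi, rfl⟩, y, rfl, h0, rfl⟩
        exact ⟨i - 1, by omega, by omega⟩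
      · rintro ⟨i, hi, rfl⟩
        exact ⟨(0:ℤ) + 2 * (i+1), ⟨i + 1, by omega, by push_cast; ring⟩, -1, rfl, by push_cast; omega,
          by push_cast; ring⟩
    | a+1, q =>
      ext z; simp only [ival, stepSt, enc, Set.mem_setOf_eq, Finset.mem_singleton]
      constructor
      · rintro ⟨r, ⟨i, hi, rfl⟩, y, rfl, h0, rfl⟩
        exact ⟨i, hi, by push_cast; ring⟩
      · rintro ⟨i, hi, rfl⟩
        exact ⟨((a:ℤ)+1) + 2 * i, ⟨i, hi, by push_cast; ring⟩, -1, rfl, by push_cast; omega,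
          by push_cast; ring⟩
  · -- P
    ext z; simp only [ival, stepSt, enc, Set.mem_setOf_eq, Finset.mem_singleton]
    constructor
    · rintro ⟨r, ⟨i, hi, rfl⟩, y, rfl, h0, rfl⟩
      exact ⟨i, hi, by push_cast; ring⟩
    · rintro ⟨i, hi, rfl⟩
      exact ⟨(a:ℤ) + 2 * i, ⟨i, hi, by push_cast; ring⟩, 1, rfl, by positivity, by push_cast; ring⟩
  · -- F
    match a, q with
    | 0, q =>
      ext z; simp only [ival, stepSt, enc, Set.mem_setOf_eq, Finset.mem_insert,
        Finset.mem_singleton]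
      constructor
      · rintro ⟨r, ⟨i, hi, rfl⟩, y, (rfl | rfl), h0, rfl⟩
        · exact ⟨i - 1, by omega, by omega⟩
        · exact ⟨i, hi, by push_cast; ring⟩
      · rintro ⟨i, hi, rfl⟩
        exact ⟨(0:ℤ) + 2 * i, ⟨i, hi, by push_cast; ring⟩, 1, Or.inr rfl, by positivity, by push_cast; ring⟩
    | a+1, q =>
      ext z; simp only [ival, stepSt, enc, Set.mem_setOf_eq, Finset.mem_insert,
        Finset.mem_singleton]
      constructor
      · rintro ⟨r, ⟨i, hi, rfl⟩, y, (rfl | rfl), h0, rfl⟩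
        · exact ⟨i, by omega, by omega⟩
        · exact ⟨i + 1, by omega, by push_cast; ring⟩
      · rintro ⟨i, hi, rfl⟩
        rcases le_or_gt i q with h | h
        · exact ⟨((a:ℤ)+1) + 2 * i, ⟨i, h, by push_cast; ring⟩, -1, Or.inl rfl, by push_cast; omega,
            by push_cast; ring⟩
        · exact ⟨((a:ℤ)+1) + 2 * (i-1), ⟨i - 1, by omega, by push_cast; omega⟩, 1, Or.inr rfl,
            by push_cast; omega, by push_cast; omega⟩

lemma stFrom_append (o : Option (ℕ × ℕ)) (x : List L) (ℓ : L) :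
    stFrom o (x ++ [ℓ]) = next (stFrom o x) ℓ := by
  induction x generalizing o with
  | nil => rfl
  | cons a x ih => simpa [stFrom] using ih (next o a)

lemma ival_next (o : Option (ℕ × ℕ)) (ℓ : L) :
    {z : ℤ | ∃ r ∈ ival o, ∃ y ∈ enc ℓ, 0 ≤ r + y ∧ z = r + y} = ival (next o ℓ) := by
  cases o with
  | none =>
    ext z; simp [ival, next]
  | some p => exact ival_step p ℓ

lemma mset_eq (x : List L) :
    mset (x.map enc) = ival (stFrom (some (0, 0)) x) := by
  induction x using List.reverseRecOn with
  | nil =>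
    ext z
    simp only [List.map_nil, mset, ival, stFrom, Set.mem_setOf_eq]
    constructor
    · rintro ⟨v, hc, _, rfl⟩
      have : v = [] := List.forall₂_nil_right_iff.mp hc
      subst this
      exact ⟨0, le_rfl, by simp⟩
    · rintro ⟨i, hi, rfl⟩
      interval_cases i
      exact ⟨[], List.Forall₂.nil, fun n => by simp, by simp⟩
  | append_singleton x ℓ ih =>
    rw [List.map_append, List.map_singleton, mset_append_singleton, ih,
      stFrom_append, ival_next]

lemma isNExcursion_iff (x : List L) :
    IsNExcursion (x.map enc) ↔ good (some (0, 0)) x := by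
  have h0 : IsNExcursion (x.map enc) ↔ (0 : ℤ) ∈ mset (x.map enc) := by
    constructor
    · rintro ⟨v, hc, hm, hs⟩; exact ⟨v, hc, hm, hs⟩
    · rintro ⟨v, hc, hm, hs⟩; exact ⟨v, hc, hm, hs⟩
  rw [h0, mset_eq]
  unfold good
  rcases h : stFrom (some (0, 0)) x with _ | ⟨a, q⟩
  · simp [ival, isGood]
  · match a with
    | 0 =>
      simp only [ival, isGood, Set.mem_setOf_eq]
      constructor
      · intro _; trivial
      · intro _; exact ⟨0, Nat.zero_le q, by simp⟩
    | a+1 =>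
      simp only [ival, isGood, Set.mem_setOf_eq]
      constructor
      · rintro ⟨i, hi, hz⟩; omega
      · intro hh; simp at hh



instance : Finite L := Finite.of_fintype L

instance goodFinite (n : ℕ) (o : Option (ℕ × ℕ)) :
    Finite {x : List L // x.length = n ∧ good o x} := by
  have : Finite {x : List L // x.length = n} :=
    ((List.finite_length_eq L n)).to_subtype
  exact Finite.of_injective
    (fun x => (⟨x.1, x.2.1⟩ : {x : List L // x.length = n}))
    (fun a b hab => Subtype.ext (by simpa using hab))

lemma nat_card_sigma {ι : Type*} [Fintype ι] (β : ι → Type*) [∀ i, Finite (β i)] :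
    Nat.card (Σ i, β i) = ∑ i, Nat.card (β i) := by
  letI := fun i => Fintype.ofFinite (β i)
  simp [Nat.card_eq_fintype_card, Fintype.card_sigma]

lemma card_good (n : ℕ) (o : Option (ℕ × ℕ)) :
    Nat.card {x : List L // x.length = n ∧ good o x} = c n o := by
  induction n generalizing o with
  | zero =>
    by_cases h : isGood o = true
    · haveI : Unique {x : List L // x.length = 0 ∧ good o x} := by
        refine ⟨⟨⟨[], rfl, h⟩⟩, ?_⟩
        rintro ⟨x, hx, hg⟩
        have : x = [] := List.length_eq_zero_iff.mp hx
        subst this; rfl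
      rw [show c 0 o = 1 from by simp [c, h]]
      exact Nat.card_unique
    · haveI : IsEmpty {x : List L // x.length = 0 ∧ good o x} := by
        constructor
        rintro ⟨x, hx, hg⟩
        have : x = [] := List.length_eq_zero_iff.mp hx
        subst this
        exact h hg
      rw [show c 0 o = 0 from by simp [c, h]]
      exact Nat.card_of_isEmpty
  | succ n ih =>
    have e : (Σ ℓ : L, {y : List L // y.length = n ∧ good (next o ℓ) y}) ≃
        {x : List L // x.length = n + 1 ∧ good o x} := by
      refine Equiv.ofBijective
        (fun p => ⟨p.1 :: p.2.1, by simp [p.2.2.1], p.2.2.2⟩) ⟨?_, ?_⟩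
      · rintro ⟨ℓ1, y1, h1⟩ ⟨ℓ2, y2, h2⟩ hh
        simp only [Subtype.mk.injEq, List.cons.injEq] at hh
        obtain ⟨rfl, hy⟩ := hh
        subst hy
        rfl
      · rintro ⟨x, hx, hg⟩
        match x with
        | ℓ :: y =>
          exact ⟨⟨ℓ, y, by simpa using hx, hg⟩, rfl⟩
    rw [← Nat.card_congr e, nat_card_sigma]
    have : ∀ ℓ : L, Nat.card {y : List L // y.length = n ∧ good (next o ℓ) y}
        = c n (next o ℓ) := fun ℓ => ih (next o ℓ)
    rw [Finset.sum_congr rfl (fun ℓ _ => this ℓ)]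
    show ∑ ℓ : L, c n (next o ℓ) = c (n+1) o
    rw [show (Finset.univ : Finset L) = {L.M, L.P, L.F} from rfl]
    rw [Finset.sum_insert (by decide), Finset.sum_insert (by decide),
      Finset.sum_singleton]
    simp only [c]
    ring

lemma enc_injective : Function.Injective enc := by
  intro a b hab
  cases a <;> cases b <;> first | rfl | (exfalso; revert hab; decide)

def decL (s : Finset ℤ) : L := if s = {-1} then .M else if s = {1} then .P else .F

lemma count_eq (n : ℕ) : dyckExcursionCount n = c n (some (0, 0)) := by
  rw [← card_good n (some (0, 0))]
  unfold dyckExcursionCount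
  apply Nat.card_congr
  apply Equiv.symm
  refine Equiv.ofBijective (fun x => ⟨x.1.map enc, by simp [x.2.1], ?_, ?_⟩) ⟨?_, ?_⟩
  · intro s hs
    obtain ⟨ℓ, _, rfl⟩ := List.mem_map.1 hs
    cases ℓ
    · exact Or.inl rfl
    · exact Or.inr (Or.inl rfl)
    · exact Or.inr (Or.inr rfl)
  · exact (isNExcursion_iff x.1).mpr x.2.2
  · rintro ⟨x1, h1⟩ ⟨x2, h2⟩ hh
    simp only [Subtype.mk.injEq] at hh
    exact Subtype.ext (List.map_injective_iff.mpr enc_injective hh)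
  · rintro ⟨w, hl, hd, he⟩
    have hw : (w.map decL).map enc = w := by
      rw [List.map_map]
      conv_rhs => rw [← List.map_id w]
      apply List.map_congr_left
      intro s hs
      rcases hd s hs with rfl | rfl | rfl
      · simp [decL, enc]
      · rw [Function.comp_apply, decL, if_neg (by decide), if_pos rfl]; rfl
      · rw [Function.comp_apply, decL, if_neg (by decide), if_neg (by decide)]; rfl
    refine ⟨⟨w.map decL, by simp [hl], ?_⟩, ?_⟩
    · exact (isNExcursion_iff (w.map decL)).mp (by rwa [hw])
    · exact Subtype.ext hw



noncomputable section

variable (t : ℝ)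

def sv : ℝ := Real.sqrt (1 - 8*t^2)
def X1 : ℝ := (1 - sv t) / (2*t)
def X2 : ℝ := (1 - 4*t^2 - sv t) / (2*t*(1 - sv t))
def Zv : ℝ := (1 - 4*t^2 - sv t) / (8*t^2)
def f0 : ℝ := 2 / (3*sv t - 1)
def g0 : ℝ := -(1 - sv t)^2 / (4*t^2*(3*sv t - 1))

def Wv : Option (ℕ × ℕ) → ℝ
  | none => 0
  | some (a, q) => f0 t * (X1 t)^a + g0 t * (X2 t)^a * (Zv t)^q

section Facts

variable (ht0 : 0 < t) (ht3 : t < 1/3)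
include ht0 ht3

lemma s_sq : (sv t)^2 = 1 - 8*t^2 := Real.sq_sqrt (by nlinarith)

lemma s_gt : 1/3 < sv t := by
  have h := s_sq t ht0 ht3
  have h0 : 0 ≤ sv t := Real.sqrt_nonneg _
  nlinarith

lemma s_lt1 : sv t < 1 := by
  have h := s_sq t ht0 ht3
  have h0 : 0 ≤ sv t := Real.sqrt_nonneg _
  nlinarith

lemma X1_pos : 0 < X1 t := by
  have := s_lt1 t ht0 ht3
  rw [X1]; exact div_pos (by linarith) (by linarith)

lemma X1_lt1 : X1 t < 1 := by
  have h := s_sq t ht0 ht3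
  have h1 := s_gt t ht0 ht3
  rw [X1, div_lt_one (by positivity)]
  nlinarith

lemma num_pos : 0 < 1 - 4*t^2 - sv t := by
  have h := s_sq t ht0 ht3
  have h0 : 0 ≤ sv t := Real.sqrt_nonneg _
  have hb : 0 < 1 - 4*t^2 + sv t := by nlinarith
  have key : (1 - 4*t^2 - sv t) * (1 - 4*t^2 + sv t) = 16*t^4 := by linear_combination -h
  nlinarith [key, hb, pow_pos ht0 4]

lemma Z_pos : 0 < Zv t := by
  have := num_pos t ht0 ht3
  rw [Zv]; exact div_pos this (by positivity)

lemma Z_lt1 : Zv t < 1 := by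
  have h := s_sq t ht0 ht3
  have h1 := s_gt t ht0 ht3
  rw [Zv, div_lt_one (by positivity)]
  nlinarith

lemma X2_pos : 0 < X2 t := by
  have h1 := num_pos t ht0 ht3
  have h2 := s_lt1 t ht0 ht3
  rw [X2]
  apply div_pos h1
  nlinarith

lemma X2_lt1 : X2 t < 1 := by
  have h := s_sq t ht0 ht3
  have h1 := s_gt t ht0 ht3
  have h2 := s_lt1 t ht0 ht3
  have h3 := num_pos t ht0 ht3
  have ha : 0 < sv t * (1 - 2*t) := by nlinarith
  have key : (sv t * (1-2*t))^2 - (1-2*t-4*t^2)^2 = 16*t^3*(1-3*t) := by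
    linear_combination (1-2*t)^2 * h
  rw [X2, div_lt_one (by nlinarith)]
  nlinarith [key, ha, mul_pos (mul_pos (mul_pos ht0 ht0) ht0) (show (0:ℝ) < 1-3*t by linarith)]

lemma E1 : X1 t = t * ((X1 t)^2 + 2) := by
  have h := s_sq t ht0 ht3
  have ht : t ≠ 0 := ne_of_gt ht0
  have hs1 : 1 - sv t ≠ 0 := by have := s_lt1 t ht0 ht3; intro hc; nlinarith
  have h31 : 3*sv t - 1 ≠ 0 := by have := s_gt t ht0 ht3; intro hc; nlinarith
  rw [X1]
  field_simp
  linear_combination (-1) * h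

lemma E4 : Zv t = t * X2 t * (2 * Zv t + 1) := by
  have h := s_sq t ht0 ht3
  have h2 := s_lt1 t ht0 ht3
  have ht : t ≠ 0 := ne_of_gt ht0
  have hs1 : 1 - sv t ≠ 0 := by have := s_lt1 t ht0 ht3; intro hc; nlinarith
  have h31 : 3*sv t - 1 ≠ 0 := by have := s_gt t ht0 ht3; intro hc; nlinarith
  rw [Zv, X2]
  field_simp
  ring

lemma E2 : X2 t = t * ((X2 t)^2 + 1 + Zv t) := by
  have h := s_sq t ht0 ht3
  have h2 := s_lt1 t ht0 ht3
  have ht : t ≠ 0 := ne_of_gt ht0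
  have hs1 : 1 - sv t ≠ 0 := by have := s_lt1 t ht0 ht3; intro hc; nlinarith
  have h31 : 3*sv t - 1 ≠ 0 := by have := s_gt t ht0 ht3; intro hc; nlinarith
  rw [Zv, X2]
  field_simp
  linear_combination (-4 - 16*t^2 + 4*(sv t)) * h

lemma E3 : f0 t = 1 + 3*t*(f0 t)*(X1 t) := by
  have h1 := s_gt t ht0 ht3
  have ht : t ≠ 0 := ne_of_gt ht0
  have hs1 : 1 - sv t ≠ 0 := by have := s_lt1 t ht0 ht3; intro hc; nlinarith
  have h31 : 3*sv t - 1 ≠ 0 := by have := s_gt t ht0 ht3; intro hc; nlinarith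
  rw [f0, X1]
  field_simp
  ring_nf

lemma E5 : f0 t + g0 t = 1 + 2*t*(f0 t * X1 t + g0 t * X2 t) := by
  have h := s_sq t ht0 ht3
  have h1 := s_gt t ht0 ht3
  have h2 := s_lt1 t ht0 ht3
  have ht : t ≠ 0 := ne_of_gt ht0
  have hs1 : 1 - sv t ≠ 0 := by have := s_lt1 t ht0 ht3; intro hc; nlinarith
  have h31 : 3*sv t - 1 ≠ 0 := by have := s_gt t ht0 ht3; intro hc; nlinarith
  rw [f0, g0, X1, X2]
  field_simp
  ring_nf

lemma E6 : f0 t + g0 t =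
    (1 - 8*t^2 - (1-12*t^2) * sv t) / (8*t^2*(1-9*t^2)) := by
  have h := s_sq t ht0 ht3
  have ht : t ≠ 0 := ne_of_gt ht0
  have h31 : 3*sv t - 1 ≠ 0 := by have := s_gt t ht0 ht3; intro hc; nlinarith
  have h9 : 1 - 9*t^2 ≠ 0 := by nlinarith
  rw [f0, g0]
  field_simp
  rw [eq_div_iff (by nlinarith)]
  linear_combination (4 - 72*t^2) * h

lemma Wfix (o : Option (ℕ × ℕ)) :
    Wv t o = (if isGood o then 1 else 0) +
      t * (Wv t (next o .M) + Wv t (next o .P) + Wv t (next o .F)) := by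
  have hE1 := E1 t ht0 ht3
  have hE2 := E2 t ht0 ht3
  have hE3 := E3 t ht0 ht3
  have hE4 := E4 t ht0 ht3
  have hE5 := E5 t ht0 ht3
  match o with
  | none => simp [Wv, next, isGood]
  | some (0, 0) =>
    show Wv t (some (0,0)) = 1 + t * (Wv t none + Wv t (some (1,0)) + Wv t (some (1,0)))
    simp only [Wv, pow_zero, pow_one, mul_one]
    linear_combination hE5
  | some (0, q+1) =>
    show Wv t (some (0,q+1)) =
      1 + t * (Wv t (some (1,q)) + Wv t (some (1,q+1)) + Wv t (some (1,q+1)))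
    simp only [Wv, pow_zero, pow_one, pow_succ, mul_one]
    linear_combination hE3 + (g0 t * (Zv t)^q) * hE4
  | some (a+1, q) =>
    show Wv t (some (a+1,q)) =
      0 + t * (Wv t (some (a,q)) + Wv t (some (a+2,q)) + Wv t (some (a,q+1)))
    simp only [Wv, pow_succ]
    linear_combination (f0 t * (X1 t)^a) * hE1 + (g0 t * (X2 t)^a * (Zv t)^q) * hE2

lemma f0_pos : 0 < f0 t := by
  have := s_gt t ht0 ht3
  rw [f0]; apply div_pos <;> nlinarith

lemma Wbound (o : Option (ℕ × ℕ)) : |Wv t o| ≤ f0 t + |g0 t| := by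
  have hf := f0_pos t ht0 ht3
  have hX1p := X1_pos t ht0 ht3
  have hX1 := X1_lt1 t ht0 ht3
  have hX2p := X2_pos t ht0 ht3
  have hX2 := X2_lt1 t ht0 ht3
  have hZp := Z_pos t ht0 ht3
  have hZ := Z_lt1 t ht0 ht3
  match o with
  | none => simp [Wv]; positivity
  | some (a, q) =>
    show |f0 t * (X1 t)^a + g0 t * (X2 t)^a * (Zv t)^q| ≤ _
    have h1 : |f0 t * (X1 t)^a| ≤ f0 t := by
      rw [abs_of_nonneg (by positivity)]
      calc f0 t * (X1 t)^a ≤ f0 t * 1 := by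
            apply mul_le_mul_of_nonneg_left _ hf.le
            exact pow_le_one₀ hX1p.le hX1.le
        _ = f0 t := mul_one _
    have h2 : |g0 t * (X2 t)^a * (Zv t)^q| ≤ |g0 t| := by
      rw [abs_mul, abs_mul]
      calc |g0 t| * |(X2 t)^a| * |(Zv t)^q| ≤ |g0 t| * 1 * 1 := by
            apply mul_le_mul _ _ (by positivity) (by positivity)
            · apply mul_le_mul_of_nonneg_left _ (abs_nonneg _)
              rw [abs_of_nonneg (by positivity)]
              exact pow_le_one₀ hX2p.le hX2.le
            · rw [abs_of_nonneg (by positivity)]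
              exact pow_le_one₀ hZp.le hZ.le
        _ = |g0 t| := by ring
    calc |f0 t * (X1 t)^a + g0 t * (X2 t)^a * (Zv t)^q|
        ≤ |f0 t * (X1 t)^a| + |g0 t * (X2 t)^a * (Zv t)^q| := abs_add_le _ _
      _ ≤ f0 t + |g0 t| := add_le_add h1 h2

omit ht0 ht3 in
lemma c_le_pow (n : ℕ) (o : Option (ℕ × ℕ)) : c n o ≤ 3^n := by
  induction n generalizing o with
  | zero => rw [c]; split <;> simp
  | succ n ih =>
    have h : (3:ℕ)^(n+1) = 3^n + 3^n + 3^n := by ring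
    rw [c, h]
    exact Nat.add_le_add (Nat.add_le_add (ih _) (ih _)) (ih _)

lemma summF (o : Option (ℕ × ℕ)) : Summable (fun n : ℕ => (c n o : ℝ) * t^n) := by
  refine Summable.of_nonneg_of_le (fun n => by positivity) (fun n => ?_)
    (summable_geometric_of_lt_one (r := 3*t) (by positivity) (by linarith))
  rw [mul_pow]
  apply mul_le_mul_of_nonneg_right _ (by positivity)
  exact_mod_cast c_le_pow n o

def FF (o : Option (ℕ × ℕ)) : ℝ := ∑' n : ℕ, (c n o : ℝ) * t^n

lemma FFbound (o : Option (ℕ × ℕ)) : |FF t o| ≤ (1-3*t)⁻¹ := by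
  rw [abs_of_nonneg (tsum_nonneg (fun n => by positivity))]
  have h1 : FF t o ≤ ∑' n : ℕ, (3*t)^n := by
    apply Summable.tsum_le_tsum _ (summF t ht0 ht3 o)
      (summable_geometric_of_lt_one (by positivity) (by linarith))
    intro n
    rw [mul_pow]
    apply mul_le_mul_of_nonneg_right _ (by positivity)
    exact_mod_cast c_le_pow n o
  rwa [tsum_geometric_of_lt_one (by positivity) (by linarith)] at h1

lemma Ffix (o : Option (ℕ × ℕ)) :
    FF t o = (if isGood o then 1 else 0) +
      t * (FF t (next o .M) + FF t (next o .P) + FF t (next o .F)) := by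
  have h0 := Summable.tsum_eq_zero_add (summF t ht0 ht3 o)
  have e : ∀ n : ℕ, ((c (n+1) o : ℝ)) * t^(n+1) =
      t * ((c n (next o .M) : ℝ) * t^n) +
        (t * ((c n (next o .P) : ℝ) * t^n) + t * ((c n (next o .F) : ℝ) * t^n)) := by
    intro n
    have : c (n+1) o = c n (next o .M) + c n (next o .P) + c n (next o .F) := rfl
    rw [this]
    push_cast
    ring
  rw [FF, h0, tsum_congr e, Summable.tsum_add ((summF t ht0 ht3 _).mul_left t)
      (((summF t ht0 ht3 _).mul_left t).add ((summF t ht0 ht3 _).mul_left t)),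
    Summable.tsum_add ((summF t ht0 ht3 _).mul_left t) ((summF t ht0 ht3 _).mul_left t),
    tsum_mul_left, tsum_mul_left, tsum_mul_left]
  have hc0 : ((c 0 o : ℝ)) * t^0 = if isGood o then 1 else 0 := by
    rw [show c 0 o = if isGood o then 1 else 0 from rfl]
    split <;> simp
  rw [hc0]
  simp only [FF]
  ring

lemma FF_eq_W (o : Option (ℕ × ℕ)) : FF t o = Wv t o := by
  set C := (1-3*t)⁻¹ + (f0 t + |g0 t|) with hC
  have key : ∀ n : ℕ, ∀ o, |FF t o - Wv t o| ≤ C * (3*t)^n := by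
    intro n
    induction n with
    | zero =>
      intro o
      simpa using (abs_sub _ _).trans
        (add_le_add (FFbound t ht0 ht3 o) (Wbound t ht0 ht3 o))
    | succ n ih =>
      intro o
      rw [Ffix t ht0 ht3 o, Wfix t ht0 ht3 o]
      have heq : (if isGood o then (1:ℝ) else 0) +
          t * (FF t (next o .M) + FF t (next o .P) + FF t (next o .F)) -
          ((if isGood o then (1:ℝ) else 0) +
          t * (Wv t (next o .M) + Wv t (next o .P) + Wv t (next o .F))) =
          t * ((FF t (next o .M) - Wv t (next o .M)) +
            (FF t (next o .P) - Wv t (next o .P)) +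
            (FF t (next o .F) - Wv t (next o .F))) := by ring
      rw [heq, abs_mul, abs_of_pos ht0]
      calc t * |_| ≤ t * (|FF t (next o .M) - Wv t (next o .M)| +
            |FF t (next o .P) - Wv t (next o .P)| +
            |FF t (next o .F) - Wv t (next o .F)|) := by
            apply mul_le_mul_of_nonneg_left _ ht0.le
            exact (abs_add_le _ _).trans (add_le_add (abs_add_le _ _) le_rfl)
        _ ≤ t * (C * (3*t)^n + C * (3*t)^n + C * (3*t)^n) := by
            apply mul_le_mul_of_nonneg_left _ ht0.le
            exact add_le_add (add_le_add (ih _) (ih _)) (ih _)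
        _ = C * (3*t)^(n+1) := by ring
  have hten : Filter.Tendsto (fun n : ℕ => C * (3*t)^n) Filter.atTop (nhds 0) := by
    have := tendsto_pow_atTop_nhds_zero_of_lt_one
      (by positivity : (0:ℝ) ≤ 3*t) (by linarith : 3*t < 1)
    simpa using this.const_mul C
  have hle : |FF t o - Wv t o| ≤ 0 :=
    ge_of_tendsto hten (Filter.Eventually.of_forall (fun n => key n o))
  exact sub_eq_zero.mp (abs_eq_zero.mp (le_antisymm hle (abs_nonneg _)))

end Facts

end

end DyckN


/-- with all weights 1,
D⁺(0,1;t) = (1 - 8t² - (1-12t²)√(1-8t²)) / (8t²(1-9t²)),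
with expansion 1 + 4t² + 28t⁴ + 224t⁶ + 1888t⁸ + ⋯ . -/
theorem dyck_excursion_gf :
    dyckExcursionCount 0 = 1 ∧ dyckExcursionCount 2 = 4 ∧ dyckExcursionCount 4 = 28 ∧
    dyckExcursionCount 6 = 224 ∧ dyckExcursionCount 8 = 1888 ∧
    ∀ t : ℝ, 0 < t → t < 1 / 3 →
      HasSum (fun n : ℕ => (dyckExcursionCount n : ℝ) * t ^ n)
        ((1 - 8 * t ^ 2 - (1 - 12 * t ^ 2) * Real.sqrt (1 - 8 * t ^ 2)) /
          (8 * t ^ 2 * (1 - 9 * t ^ 2))) := by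
  refine ⟨by rw [DyckN.count_eq]; decide, by rw [DyckN.count_eq]; decide,
    by rw [DyckN.count_eq]; decide, by rw [DyckN.count_eq]; decide,
    by rw [DyckN.count_eq]; decide, ?_⟩
  intro t ht0 ht3
  have hrw : (fun n : ℕ => (dyckExcursionCount n : ℝ) * t ^ n)
      = fun n : ℕ => (DyckN.c n (some (0, 0)) : ℝ) * t ^ n := by
    funext n; rw [DyckN.count_eq]
  rw [hrw]
  have h13 : t < 1/3 := ht3
  have hW : DyckN.FF t (some (0, 0)) =
      (1 - 8 * t ^ 2 - (1 - 12 * t ^ 2) * Real.sqrt (1 - 8 * t ^ 2)) /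
        (8 * t ^ 2 * (1 - 9 * t ^ 2)) := by
    rw [DyckN.FF_eq_W t ht0 h13]
    show DyckN.f0 t * (DyckN.X1 t)^0 + DyckN.g0 t * (DyckN.X2 t)^0 * (DyckN.Zv t)^0 = _
    simp only [pow_zero, mul_one]
    rw [DyckN.E6 t ht0 h13, DyckN.sv]
  exact hW ▸ (DyckN.summF t ht0 h13 (some (0, 0))).hasSum
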